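/- Define S_m(x,y) = ∑_{k=0}^m [m+k choose k]_q ((y;q)_k/(x;q)_k) q^k. Then for every m ≥ 1: S_m(x,y) - ((x - q^{m+1})/(x - yq^{m+1})) S_{m-1}(x,y) = q^m ((q + x - q^{m+1}(1+q^m) y)/(x - q^{m+1} y)) [2m-1 choose m]_q (y;q)_m/(x;q)_m. -/

import Mathlib

noncomputable def qPoch (a q : ℂ) (n : ℕ) : ℂ := ∏ i ∈ Finset.range n, (1 - a * q ^ i)

noncomputable def qPochInf (a q : ℂ) : ℂ := ∏' i : ℕ, (1 - a * q ^ i)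

noncomputable def qBinom (q : ℂ) (m k : ℕ) : ℂ :=
  if k ≤ m then qPoch q q m / (qPoch q q k * qPoch q q (m - k)) else 0

lemma qPoch_zero' (a q : ℂ) : qPoch a q 0 = 1 := by simp [qPoch]

lemma qPoch_succ' (a q : ℂ) (n : ℕ) :
    qPoch a q (n + 1) = qPoch a q n * (1 - a * q ^ n) :=
  Finset.prod_range_succ _ n

lemma qPoch_q_ne_zero {q : ℂ} (hq1 : ‖q‖ < 1) (n : ℕ) : qPoch q q n ≠ 0 := by
  induction n with
  | zero => simp [qPoch_zero']
  | succ n ih =>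
    rw [qPoch_succ']
    refine mul_ne_zero ih ?_
    intro h
    have h1 : q * q ^ n = 1 := by linear_combination -h
    have h2 : ‖q * q ^ n‖ < 1 := by
      rw [norm_mul, norm_pow]
      have h3 : ‖q‖ ^ n ≤ 1 := pow_le_one₀ (norm_nonneg q) hq1.le
      nlinarith [norm_nonneg q]
    rw [h1] at h2
    simp at h2

lemma qBinom_add (q : ℂ) (a k : ℕ) :
    qBinom q (a + k) k = qPoch q q (a + k) / (qPoch q q k * qPoch q q a) := by
  rw [qBinom, if_pos (Nat.le_add_left k a), Nat.add_sub_cancel]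

noncomputable def wAux (q x y : ℂ) (M : ℕ) : ℕ → ℂ
  | 0 => 0
  | (K + 1) => q ^ (M + 1) * qBinom q (M + 1 + K) K *
      (qPoch y q (K + 1) / qPoch x q (K + 1)) * (q - x * q ^ (K + 1))

lemma wAux_zero (q x y : ℂ) (M : ℕ) : wAux q x y M 0 = 0 := rfl

lemma wAux_succ (q x y : ℂ) (M K : ℕ) : wAux q x y M (K + 1) =
    q ^ (M + 1) * qBinom q (M + 1 + K) K *
      (qPoch y q (K + 1) / qPoch x q (K + 1)) * (q - x * q ^ (K + 1)) := rfl

set_option maxHeartbeats 1000000 in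
theorem stmt_18 (q x y : ℂ) (m : ℕ) (hm : 1 ≤ m) (hq0 : 0 < ‖q‖) (hq1 : ‖q‖ < 1)
    (hx : ∀ k, qPoch x q k ≠ 0) (hxy : x ≠ y * q ^ (m + 1))
    (S : ℕ → ℂ)
    (hS : ∀ j, S j = ∑ k ∈ Finset.range (j + 1),
      qBinom q (j + k) k * (qPoch y q k / qPoch x q k) * q ^ k) :
    S m - ((x - q ^ (m + 1)) / (x - y * q ^ (m + 1))) * S (m - 1) =
    q ^ m * ((q + x - q ^ (m + 1) * (1 + q ^ m) * y) / (x - q ^ (m + 1) * y)) *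
      qBinom q (2 * m - 1) m * (qPoch y q m / qPoch x q m) := by
  obtain ⟨M, rfl⟩ : ∃ M, m = M + 1 := ⟨m - 1, (Nat.succ_pred_eq_of_pos hm).symm⟩
  have hpq : ∀ n, qPoch q q n ≠ 0 := qPoch_q_ne_zero hq1
  have hfac : ∀ n : ℕ, (1 : ℂ) - q * q ^ n ≠ 0 := by
    intro n
    have := hpq (n + 1)
    rw [qPoch_succ'] at this
    exact right_ne_zero_of_mul this
  have hxfac : ∀ n : ℕ, (1 : ℂ) - x * q ^ n ≠ 0 := by
    intro n
    have := hx (n + 1)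
    rw [qPoch_succ'] at this
    exact right_ne_zero_of_mul this
  have hc : x - y * q ^ (M + 1 + 1) ≠ 0 := sub_ne_zero.mpr hxy
  have key : ∀ k, (x - y * q ^ (M + 1 + 1)) * (qBinom q (M + 1 + k) k * (qPoch y q k / qPoch x q k) * q ^ k)
      - (x - q ^ (M + 1 + 1)) * (qBinom q (M + k) k * (qPoch y q k / qPoch x q k) * q ^ k)
      = wAux q x y M (k + 1) - wAux q x y M k := by
    intro k
    cases k with
    | zero =>
      have hy1e : qPoch y q (0 + 1) = 1 - y := by
        rw [qPoch_succ', qPoch_zero']; simp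
      have hx1e : qPoch x q (0 + 1) = 1 - x := by
        rw [qPoch_succ', qPoch_zero']; simp
      have hx0 : (1 : ℂ) - x ≠ 0 := by
        have := hxfac 0; simpa using this
      rw [wAux_zero, wAux_succ, qBinom_add, qBinom_add, hy1e, hx1e]
      simp only [Nat.add_zero, qPoch_zero', pow_zero, pow_one]
      field_simp [hpq (M + 1), hpq M, hx0]
      ring
    | succ K =>
      rw [wAux_succ, wAux_succ]
      rw [qBinom_add, qBinom_add, qBinom_add]
      rw [show (M + 1) + (K + 1) = M + K + 1 + 1 by omega,
          show M + (K + 1) = M + K + 1 by omega,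
          show M + 1 + K = M + K + 1 by omega]
      field_simp [hpq M, hpq K, hpq (M + 1), hpq (K + 1),
        hx (K + 1), hx (K + 1 + 1)]
      rw [qPoch_succ' q q (M + K + 1), qPoch_succ' q q M, qPoch_succ' q q K,
          qPoch_succ' y q (K + 1), qPoch_succ' x q (K + 1)]
      ring
  have h3 : ∑ k ∈ Finset.range (M + 1 + 1),
      ((x - y * q ^ (M + 1 + 1)) * (qBinom q (M + 1 + k) k * (qPoch y q k / qPoch x q k) * q ^ k)
        - (x - q ^ (M + 1 + 1)) * (qBinom q (M + k) k * (qPoch y q k / qPoch x q k) * q ^ k))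
      = wAux q x y M (M + 1 + 1) := by
    rw [Finset.sum_congr rfl fun k _ => key k, Finset.sum_range_sub, wAux_zero, sub_zero]
  have h4 : ∑ k ∈ Finset.range (M + 1 + 1),
      ((x - y * q ^ (M + 1 + 1)) * (qBinom q (M + 1 + k) k * (qPoch y q k / qPoch x q k) * q ^ k)
        - (x - q ^ (M + 1 + 1)) * (qBinom q (M + k) k * (qPoch y q k / qPoch x q k) * q ^ k))
      = (x - y * q ^ (M + 1 + 1)) * (∑ k ∈ Finset.range (M + 1 + 1),
          qBinom q (M + 1 + k) k * (qPoch y q k / qPoch x q k) * q ^ k)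
        - (x - q ^ (M + 1 + 1)) * (∑ k ∈ Finset.range (M + 1 + 1),
          qBinom q (M + k) k * (qPoch y q k / qPoch x q k) * q ^ k) := by
    rw [Finset.sum_sub_distrib, ← Finset.mul_sum, ← Finset.mul_sum]
  have h5 : ∑ k ∈ Finset.range (M + 1 + 1),
      qBinom q (M + k) k * (qPoch y q k / qPoch x q k) * q ^ k
      = (∑ k ∈ Finset.range (M + 1),
          qBinom q (M + k) k * (qPoch y q k / qPoch x q k) * q ^ k)
        + qBinom q (M + (M + 1)) (M + 1) *
            (qPoch y q (M + 1) / qPoch x q (M + 1)) * q ^ (M + 1) :=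
    Finset.sum_range_succ _ _
  have hsum : (x - y * q ^ (M + 1 + 1)) * S (M + 1) - (x - q ^ (M + 1 + 1)) * S M
      = wAux q x y M (M + 1 + 1)
      + (x - q ^ (M + 1 + 1)) * (qBinom q (M + (M + 1)) (M + 1) *
          (qPoch y q (M + 1) / qPoch x q (M + 1)) * q ^ (M + 1)) := by
    rw [hS (M + 1), hS M]
    linear_combination h3 - h4 + (x - q ^ (M + 1 + 1)) * h5
  have hstar : (x - y * q ^ (M + 1 + 1)) * S (M + 1) - (x - q ^ (M + 1 + 1)) * S M =
      q ^ (M + 1) * (q + x - q ^ (M + 1 + 1) * (1 + q ^ (M + 1)) * y) *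
        qBinom q (M + (M + 1)) (M + 1) * (qPoch y q (M + 1) / qPoch x q (M + 1)) := by
    rw [hsum, wAux_succ]
    rw [qBinom_add, qBinom_add]
    rw [show (M + 1) + (M + 1) = (M + (M + 1)) + 1 by omega]
    field_simp [hpq M, hpq (M + 1), hx (M + 1), hx (M + 1 + 1)]
    rw [qPoch_succ' q q (M + (M + 1)), qPoch_succ' q q M,
        qPoch_succ' y q (M + 1), qPoch_succ' x q (M + 1)]
    ring
  have h21 : 2 * (M + 1) - 1 = M + (M + 1) := by omega
  have hm1 : M + 1 - 1 = M := by omega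
  rw [hm1, h21]
  have hc' : x - q ^ (M + 1 + 1) * y ≠ 0 := by rw [mul_comm]; exact hc
  have hfin : S (M + 1) - ((x - q ^ (M + 1 + 1)) / (x - y * q ^ (M + 1 + 1))) * S M
      = ((x - y * q ^ (M + 1 + 1)) * S (M + 1) - (x - q ^ (M + 1 + 1)) * S M)
          / (x - y * q ^ (M + 1 + 1)) := by
    field_simp
  rw [hfin, hstar]
  field_simp [hx (M + 1)]
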